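/- Normal Form Theorem: for every closed CLL process term t there exists a term s in normal form (s ∈ NF) such that ⊢ t = s in AX_CLL. -/

import Mathlib

namespace CLL

attribute [local instance] Classical.propDecidable

/-- CLL process terms over a set `Act` of visible actions.  The action `τ` is
represented by `none : Option Act`, a visible action `a` by `some a`. -/
inductive Tm (Act : Type) : Type where
  | nil  : Tm Act                            -- 0
  | bot  : Tm Act                            -- ⊥
  | pre  : Option Act → Tm Act → Tm Act      -- α.t
  | ec   : Tm Act → Tm Act → Tm Act          -- t □ t
  | conj : Tm Act → Tm Act → Tm Act          -- t ∧ t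
  | disj : Tm Act → Tm Act → Tm Act          -- t ∨ t
  | par  : Set Act → Tm Act → Tm Act → Tm Act -- t ∥_A t

/-- A transition model: a set of transitions `t →α t'`, of instances `t F` of the
inconsistency predicate, and of instances `t F̄_α` of the auxiliary predicates. -/
structure Model (Act : Type) where
  Tr   : Tm Act → Option Act → Tm Act → Prop
  F    : Tm Act → Prop
  Fbar : Tm Act → Option Act → Prop

variable {Act : Type}

/-- The least transition relation of the positive TSS `Strip(P_CLL, M)`:
ground instances of transition rules of `P_CLL` whose negative premises
(checked against `M`) hold, with those negative premises removed. -/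
inductive STr (M : Model Act) : Tm Act → Option Act → Tm Act → Prop where
  | pre (α : Option Act) (t : Tm Act) : STr M (Tm.pre α t) α t
  | ecL {t1 t2 y1 : Tm Act} {a : Act} :
      STr M t1 (some a) y1 → (∀ y, ¬ M.Tr t2 none y) →
      STr M (Tm.ec t1 t2) (some a) y1
  | ecR {t1 t2 y2 : Tm Act} {a : Act} :
      (∀ y, ¬ M.Tr t1 none y) → STr M t2 (some a) y2 →
      STr M (Tm.ec t1 t2) (some a) y2
  | ecTauL {t1 t2 y1 : Tm Act} :
      STr M t1 none y1 → STr M (Tm.ec t1 t2) none (Tm.ec y1 t2)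
  | ecTauR {t1 t2 y2 : Tm Act} :
      STr M t2 none y2 → STr M (Tm.ec t1 t2) none (Tm.ec t1 y2)
  | conjAct {t1 t2 y1 y2 : Tm Act} {a : Act} :
      STr M t1 (some a) y1 → STr M t2 (some a) y2 →
      STr M (Tm.conj t1 t2) (some a) (Tm.conj y1 y2)
  | conjTauL {t1 t2 y1 : Tm Act} :
      STr M t1 none y1 → STr M (Tm.conj t1 t2) none (Tm.conj y1 t2)
  | conjTauR {t1 t2 y2 : Tm Act} :
      STr M t2 none y2 → STr M (Tm.conj t1 t2) none (Tm.conj t1 y2)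
  | disjL (t1 t2 : Tm Act) : STr M (Tm.disj t1 t2) none t1
  | disjR (t1 t2 : Tm Act) : STr M (Tm.disj t1 t2) none t2
  | parTauL {A : Set Act} {t1 t2 y1 : Tm Act} :
      STr M t1 none y1 → STr M (Tm.par A t1 t2) none (Tm.par A y1 t2)
  | parTauR {A : Set Act} {t1 t2 y2 : Tm Act} :
      STr M t2 none y2 → STr M (Tm.par A t1 t2) none (Tm.par A t1 y2)
  | parL {A : Set Act} {t1 t2 y1 : Tm Act} {a : Act} :
      STr M t1 (some a) y1 → (∀ y, ¬ M.Tr t2 none y) → a ∉ A →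
      STr M (Tm.par A t1 t2) (some a) (Tm.par A y1 t2)
  | parR {A : Set Act} {t1 t2 y2 : Tm Act} {a : Act} :
      (∀ y, ¬ M.Tr t1 none y) → STr M t2 (some a) y2 → a ∉ A →
      STr M (Tm.par A t1 t2) (some a) (Tm.par A t1 y2)
  | parSync {A : Set Act} {t1 t2 y1 y2 : Tm Act} {a : Act} :
      STr M t1 (some a) y1 → STr M t2 (some a) y2 → a ∈ A →
      STr M (Tm.par A t1 t2) (some a) (Tm.par A y1 y2)

/-- Least model of the `F̄_α` rules of `Strip(P_CLL, M)`. -/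
inductive SFbar (M : Model Act) : Tm Act → Option Act → Prop where
  | intro {t1 t2 y : Tm Act} {α : Option Act} :
      STr M (Tm.conj t1 t2) α y → ¬ M.F y → SFbar M (Tm.conj t1 t2) α

/-- Least model of the `F` rules of `Strip(P_CLL, M)`. -/
inductive SF (M : Model Act) : Tm Act → Prop where
  | bot : SF M Tm.bot
  | pre {t : Tm Act} (α : Option Act) : SF M t → SF M (Tm.pre α t)
  | disj {t1 t2 : Tm Act} : SF M t1 → SF M t2 → SF M (Tm.disj t1 t2)
  | ecL {t1 t2 : Tm Act} : SF M t1 → SF M (Tm.ec t1 t2)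
  | ecR {t1 t2 : Tm Act} : SF M t2 → SF M (Tm.ec t1 t2)
  | conjL {t1 t2 : Tm Act} : SF M t1 → SF M (Tm.conj t1 t2)
  | conjR {t1 t2 : Tm Act} : SF M t2 → SF M (Tm.conj t1 t2)
  | parL {A : Set Act} {t1 t2 : Tm Act} : SF M t1 → SF M (Tm.par A t1 t2)
  | parR {A : Set Act} {t1 t2 : Tm Act} : SF M t2 → SF M (Tm.par A t1 t2)
  | conjMisL {t1 t2 y1 : Tm Act} {a : Act} :
      STr M t1 (some a) y1 → (∀ y, ¬ M.Tr t2 (some a) y) →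
      (∀ y, ¬ M.Tr (Tm.conj t1 t2) none y) → SF M (Tm.conj t1 t2)
  | conjMisR {t1 t2 y2 : Tm Act} {a : Act} :
      (∀ y, ¬ M.Tr t1 (some a) y) → STr M t2 (some a) y2 →
      (∀ y, ¬ M.Tr (Tm.conj t1 t2) none y) → SF M (Tm.conj t1 t2)
  | conjDead {t1 t2 z : Tm Act} {α : Option Act} :
      STr M (Tm.conj t1 t2) α z → ¬ M.Fbar (Tm.conj t1 t2) α →
      SF M (Tm.conj t1 t2)

/-- `M` is a stable transition model of `P_CLL`:  `M` coincides with the least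
model of the positive TSS `Strip(P_CLL, M)`. -/
def IsStable (M : Model Act) : Prop :=
  (∀ t α t', M.Tr t α t' ↔ STr M t α t') ∧
  (∀ t, M.F t ↔ SF M t) ∧
  (∀ t α, M.Fbar t α ↔ SFbar M t α)

/-- `t` is stable: it has no τ-transition. -/
def Stable (M : Model Act) (t : Tm Act) : Prop := ∀ t', ¬ M.Tr t none t'

/-- The ready set `I(t)`. -/
def Ready (M : Model Act) (t : Tm Act) : Set (Option Act) :=
  {α | ∃ u, M.Tr t α u}

/-- One τ-step between consistent terms: `t →τ_F s`. -/
def TauF (M : Model Act) (t s : Tm Act) : Prop :=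
  M.Tr t none s ∧ ¬ M.F t ∧ ¬ M.F s

/-- `t ⇒ε_F s`: a sequence of τ-transitions all whose terms (endpoints included)
are consistent. -/
def EpsF (M : Model Act) (t s : Tm Act) : Prop :=
  ¬ M.F t ∧ Relation.ReflTransGen (TauF M) t s

/-- `t ⇒ε_F| s`:  `t ⇒ε_F s` with `s` stable. -/
def EpsFS (M : Model Act) (t s : Tm Act) : Prop :=
  EpsF M t s ∧ Stable M s

/-- `t ⇒α_F s`. -/
def WeakF (M : Model Act) (α : Option Act) (t s : Tm Act) : Prop :=
  ∃ r p, EpsF M t r ∧ M.Tr r α p ∧ EpsF M p s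

/-- `t ⇒α_F| s`. -/
def WeakFS (M : Model Act) (α : Option Act) (t s : Tm Act) : Prop :=
  WeakF M α t s ∧ Stable M s

/-- `R` is a stable ready simulation relation. -/
def IsRS (M : Model Act) (R : Tm Act → Tm Act → Prop) : Prop :=
  ∀ t s, R t s →
    (Stable M t ∧ Stable M s) ∧
    (¬ M.F t → ¬ M.F s) ∧
    (∀ (a : Act) t', WeakFS M (some a) t t' →
      ∃ s', WeakFS M (some a) s s' ∧ R t' s') ∧
    (¬ M.F t → Ready M t = Ready M s)

/-- `t ⊏̃_RS s`. -/
def RSs (M : Model Act) (t s : Tm Act) : Prop :=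
  ∃ R, IsRS M R ∧ R t s

/-- `t ⊑_RS s`. -/
def RSle (M : Model Act) (t s : Tm Act) : Prop :=
  ∀ t', EpsFS M t t' → ∃ s', EpsFS M s s' ∧ RSs M t' s'

/-- `t =_RS s`. -/
def RSeq (M : Model Act) (t s : Tm Act) : Prop :=
  RSle M t s ∧ RSle M s t

/-- The binary operators `□`, `∧` and `∥_A`. -/
def IsStaticOp (Act : Type) (op : Tm Act → Tm Act → Tm Act) : Prop :=
  op = Tm.ec ∨ op = Tm.conj ∨ ∃ A : Set Act, op = Tm.par A

/-- General external choice `□_{i<n} t_i` over a finite sequence of terms. -/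
def bigEC : List (Tm Act) → Tm Act
  | [] => Tm.nil
  | t :: ts => ts.foldl Tm.ec t

/-- General disjunction `⋁_{i<n} t_i` over a finite (nonempty) sequence. -/
def bigDisj : List (Tm Act) → Tm Act
  | [] => Tm.nil
  | t :: ts => ts.foldl Tm.disj t

/-- `□_{i<n} a_i.t_i` for a sequence of prefixed terms given by pairs. -/
def ecPre (l : List (Act × Tm Act)) : Tm Act :=
  bigEC (l.map fun p => Tm.pre (some p.1) p.2)

/-- The sequence of all `a_i.(t_i ∧ s_j)` with `a_i = b_j`. -/
noncomputable def matched (l1 l2 : List (Act × Tm Act)) : List (Act × Tm Act) :=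
  ((l1.product l2).filter fun q => decide (q.1.1 = q.2.1)).map
    fun q => (q.1.1, Tm.conj q.1.2 q.2.2)

/-- The right-hand side `((□Ω1)□(□Ω2))□(□Ω3)` of the expansion law. -/
noncomputable def expRHS (A : Set Act) (l1 l2 : List (Act × Tm Act)) : Tm Act :=
  Tm.ec
    (Tm.ec
      (bigEC ((l1.filter fun p => decide (p.1 ∉ A)).map
        fun p => Tm.pre (some p.1) (Tm.par A p.2 (ecPre l2))))
      (bigEC ((l2.filter fun q => decide (q.1 ∉ A)).map
        fun q => Tm.pre (some q.1) (Tm.par A (ecPre l1) q.2))))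
    (bigEC (((l1.product l2).filter fun q => decide (q.1.1 = q.2.1 ∧ q.1.1 ∈ A)).map
      fun q => Tm.pre (some q.1.1) (Tm.par A q.1.2 q.2.2)))

/-- Basic process terms: built from `0` by prefixing, `∨`, `□` and `∥_A`. -/
inductive Basic : Tm Act → Prop where
  | nil : Basic Tm.nil
  | pre (α : Option Act) {t : Tm Act} : Basic t → Basic (Tm.pre α t)
  | disj {t1 t2 : Tm Act} : Basic t1 → Basic t2 → Basic (Tm.disj t1 t2)
  | ec {t1 t2 : Tm Act} : Basic t1 → Basic t2 → Basic (Tm.ec t1 t2)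
  | par (A : Set Act) {t1 t2 : Tm Act} :
      Basic t1 → Basic t2 → Basic (Tm.par A t1 t2)

/-- Derivability `⊢ t ≤ s` in the axiomatic system `AX_CLL`. -/
inductive Deriv : Tm Act → Tm Act → Prop where
  -- inference rules
  | refl (t : Tm Act) : Deriv t t
  | trans {t u s : Tm Act} : Deriv t u → Deriv u s → Deriv t s
  | pre_mono (α : Option Act) {t s : Tm Act} :
      Deriv t s → Deriv (Tm.pre α t) (Tm.pre α s)
  | ec_mono {t1 s1 t2 s2 : Tm Act} :
      Deriv t1 s1 → Deriv t2 s2 → Deriv (Tm.ec t1 t2) (Tm.ec s1 s2)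
  | conj_mono {t1 s1 t2 s2 : Tm Act} :
      Deriv t1 s1 → Deriv t2 s2 → Deriv (Tm.conj t1 t2) (Tm.conj s1 s2)
  | disj_mono {t1 s1 t2 s2 : Tm Act} :
      Deriv t1 s1 → Deriv t2 s2 → Deriv (Tm.disj t1 t2) (Tm.disj s1 s2)
  | par_mono (A : Set Act) {t1 s1 t2 s2 : Tm Act} :
      Deriv t1 s1 → Deriv t2 s2 → Deriv (Tm.par A t1 t2) (Tm.par A s1 s2)
  -- EC1–EC5
  | ec_comm (x y : Tm Act) : Deriv (Tm.ec x y) (Tm.ec y x)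
  | ec_assoc1 (x y z : Tm Act) : Deriv (Tm.ec (Tm.ec x y) z) (Tm.ec x (Tm.ec y z))
  | ec_assoc2 (x y z : Tm Act) : Deriv (Tm.ec x (Tm.ec y z)) (Tm.ec (Tm.ec x y) z)
  | ec_idem1 (x : Tm Act) : Deriv (Tm.ec x x) x
  | ec_idem2 (x : Tm Act) : Deriv x (Tm.ec x x)
  | ec_nil1 (x : Tm Act) : Deriv (Tm.ec x Tm.nil) x
  | ec_nil2 (x : Tm Act) : Deriv x (Tm.ec x Tm.nil)
  | ec_bot1 (x : Tm Act) : Deriv (Tm.ec x Tm.bot) Tm.bot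
  | ec_bot2 (x : Tm Act) : Deriv Tm.bot (Tm.ec x Tm.bot)
  -- DI1–DI5
  | di_comm (x y : Tm Act) : Deriv (Tm.disj x y) (Tm.disj y x)
  | di_assoc1 (x y z : Tm Act) :
      Deriv (Tm.disj x (Tm.disj y z)) (Tm.disj (Tm.disj x y) z)
  | di_assoc2 (x y z : Tm Act) :
      Deriv (Tm.disj (Tm.disj x y) z) (Tm.disj x (Tm.disj y z))
  | di_idem1 (x : Tm Act) : Deriv (Tm.disj x x) x
  | di_idem2 (x : Tm Act) : Deriv x (Tm.disj x x)
  | di_bot1 (x : Tm Act) : Deriv (Tm.disj x Tm.bot) x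
  | di_bot2 (x : Tm Act) : Deriv x (Tm.disj x Tm.bot)
  | di_le (x y : Tm Act) : Deriv x (Tm.disj x y)
  -- CO1–CO4
  | co_comm (x y : Tm Act) : Deriv (Tm.conj x y) (Tm.conj y x)
  | co_assoc1 (x y z : Tm Act) :
      Deriv (Tm.conj (Tm.conj x y) z) (Tm.conj x (Tm.conj y z))
  | co_assoc2 (x y z : Tm Act) :
      Deriv (Tm.conj x (Tm.conj y z)) (Tm.conj (Tm.conj x y) z)
  | co_idem1 (x : Tm Act) : Deriv (Tm.conj x x) x
  | co_idem2 (x : Tm Act) : Deriv x (Tm.conj x x)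
  | co_bot1 (x : Tm Act) : Deriv (Tm.conj x Tm.bot) Tm.bot
  | co_bot2 (x : Tm Act) : Deriv Tm.bot (Tm.conj x Tm.bot)
  -- DS1–DS4
  | ds1 (x y z : Tm Act) :
      Deriv (Tm.ec x (Tm.disj y z)) (Tm.disj (Tm.ec x y) (Tm.ec x z))
  | ds2 (x y z : Tm Act) :
      Deriv (Tm.conj x (Tm.disj y z)) (Tm.disj (Tm.conj x y) (Tm.conj x z))
  | ds3 (A : Set Act) (x y z : Tm Act) :
      Deriv (Tm.par A x (Tm.disj y z)) (Tm.disj (Tm.par A x y) (Tm.par A x z))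
  | ds4 (a : Act) {x y : Tm Act} : Basic x → Basic y →
      Deriv (Tm.pre (some a) (Tm.disj x y))
            (Tm.ec (Tm.pre (some a) x) (Tm.pre (some a) y))
  -- PR1, PR2
  | pr1a (a : Act) : Deriv (Tm.pre (some a) Tm.bot) Tm.bot
  | pr1b (a : Act) : Deriv Tm.bot (Tm.pre (some a) Tm.bot)
  | pr2a (x : Tm Act) : Deriv (Tm.pre none x) x
  | pr2b (x : Tm Act) : Deriv x (Tm.pre none x)
  -- PA1, PA2
  | pa_comm (A : Set Act) (x y : Tm Act) : Deriv (Tm.par A x y) (Tm.par A y x)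
  | pa_bot1 (A : Set Act) (x : Tm Act) : Deriv (Tm.par A x Tm.bot) Tm.bot
  | pa_bot2 (A : Set Act) (x : Tm Act) : Deriv Tm.bot (Tm.par A x Tm.bot)
  -- ECC1–ECC3
  | ecc1a (l1 l2 : List (Act × Tm Act)) :
      ({a | a ∈ l1.map Prod.fst} : Set Act) ≠ {a | a ∈ l2.map Prod.fst} →
      Deriv (Tm.conj (ecPre l1) (ecPre l2)) Tm.bot
  | ecc1b (l1 l2 : List (Act × Tm Act)) :
      ({a | a ∈ l1.map Prod.fst} : Set Act) ≠ {a | a ∈ l2.map Prod.fst} →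
      Deriv Tm.bot (Tm.conj (ecPre l1) (ecPre l2))
  | ecc2 (l : List (Act × Tm Act × Tm Act)) :
      Deriv (ecPre (l.map fun p => (p.1, Tm.conj p.2.1 p.2.2)))
            (Tm.conj (ecPre (l.map fun p => (p.1, p.2.1)))
                     (ecPre (l.map fun p => (p.1, p.2.2))))
  | ecc3 (l : List (Act × Tm Act × Tm Act)) :
      (l.map Prod.fst).Nodup →
      Deriv (Tm.conj (ecPre (l.map fun p => (p.1, p.2.1)))
                     (ecPre (l.map fun p => (p.1, p.2.2))))
            (ecPre (l.map fun p => (p.1, Tm.conj p.2.1 p.2.2)))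
  -- EXP1, EXP2
  | exp1 (A : Set Act) (l1 l2 : List (Act × Tm Act)) :
      (∀ p ∈ l1, Basic p.2) → (∀ q ∈ l2, Basic q.2) →
      Deriv (Tm.par A (ecPre l1) (ecPre l2)) (expRHS A l1 l2)
  | exp2 (A : Set Act) (l1 l2 : List (Act × Tm Act)) :
      (∀ p ∈ l1, Basic p.2) → (∀ q ∈ l2, Basic q.2) →
      Deriv (expRHS A l1 l2) (Tm.par A (ecPre l1) (ecPre l2))

/-- The set `NF_B` of normal forms different from `⊥`. -/
inductive NFB : Tm Act → Prop where
  | mk (ls : List (List (Act × Tm Act))) :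
      ls ≠ [] →
      (∀ l ∈ ls, (l.map Prod.fst).Nodup) →
      (∀ l ∈ ls, ∀ p ∈ l, NFB p.2) →
      NFB (bigDisj (ls.map ecPre))

/-- Normal forms. -/
def NF (t : Tm Act) : Prop := t = Tm.bot ∨ NFB t

end CLL
set_option linter.dupNamespace false
namespace CLL
attribute [local instance] Classical.propDecidable
variable {Act : Type}

/-- Provable equality. -/
def Eqv (t s : Tm Act) : Prop := Deriv t s ∧ Deriv s t

theorem Eqv.refl (t : Tm Act) : Eqv t t := ⟨.refl t, .refl t⟩
theorem Eqv.symm {t s : Tm Act} (h : Eqv t s) : Eqv s t := ⟨h.2, h.1⟩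
theorem Eqv.trans {t u s : Tm Act} (h1 : Eqv t u) (h2 : Eqv u s) : Eqv t s :=
  ⟨h1.1.trans h2.1, h2.2.trans h1.2⟩
theorem Eqv.ecc {a b c d : Tm Act} (h1 : Eqv a b) (h2 : Eqv c d) :
    Eqv (Tm.ec a c) (Tm.ec b d) := ⟨.ec_mono h1.1 h2.1, .ec_mono h1.2 h2.2⟩
theorem Eqv.disjc {a b c d : Tm Act} (h1 : Eqv a b) (h2 : Eqv c d) :
    Eqv (Tm.disj a c) (Tm.disj b d) := ⟨.disj_mono h1.1 h2.1, .disj_mono h1.2 h2.2⟩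
theorem Eqv.conjc {a b c d : Tm Act} (h1 : Eqv a b) (h2 : Eqv c d) :
    Eqv (Tm.conj a c) (Tm.conj b d) := ⟨.conj_mono h1.1 h2.1, .conj_mono h1.2 h2.2⟩
theorem Eqv.parc (A : Set Act) {a b c d : Tm Act} (h1 : Eqv a b) (h2 : Eqv c d) :
    Eqv (Tm.par A a c) (Tm.par A b d) := ⟨.par_mono A h1.1 h2.1, .par_mono A h1.2 h2.2⟩
theorem Eqv.prec (α : Option Act) {a b : Tm Act} (h : Eqv a b) :
    Eqv (Tm.pre α a) (Tm.pre α b) := ⟨.pre_mono α h.1, .pre_mono α h.2⟩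

theorem eqv_ec_comm (x y : Tm Act) : Eqv (Tm.ec x y) (Tm.ec y x) := ⟨.ec_comm x y, .ec_comm y x⟩
theorem eqv_ec_assoc (x y z : Tm Act) : Eqv (Tm.ec (Tm.ec x y) z) (Tm.ec x (Tm.ec y z)) :=
  ⟨.ec_assoc1 x y z, .ec_assoc2 x y z⟩
theorem eqv_ec_nil (x : Tm Act) : Eqv (Tm.ec x Tm.nil) x := ⟨.ec_nil1 x, .ec_nil2 x⟩
theorem eqv_ec_bot (x : Tm Act) : Eqv (Tm.ec x Tm.bot) Tm.bot := ⟨.ec_bot1 x, .ec_bot2 x⟩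
theorem eqv_ec_idem (x : Tm Act) : Eqv (Tm.ec x x) x := ⟨.ec_idem1 x, .ec_idem2 x⟩
theorem eqv_di_comm (x y : Tm Act) : Eqv (Tm.disj x y) (Tm.disj y x) := ⟨.di_comm x y, .di_comm y x⟩
theorem eqv_di_assoc (x y z : Tm Act) : Eqv (Tm.disj (Tm.disj x y) z) (Tm.disj x (Tm.disj y z)) :=
  ⟨.di_assoc2 x y z, .di_assoc1 x y z⟩
theorem eqv_di_bot (x : Tm Act) : Eqv (Tm.disj x Tm.bot) x := ⟨.di_bot1 x, .di_bot2 x⟩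
theorem eqv_di_idem (x : Tm Act) : Eqv (Tm.disj x x) x := ⟨.di_idem1 x, .di_idem2 x⟩
theorem eqv_co_comm (x y : Tm Act) : Eqv (Tm.conj x y) (Tm.conj y x) := ⟨.co_comm x y, .co_comm y x⟩
theorem eqv_co_bot (x : Tm Act) : Eqv (Tm.conj x Tm.bot) Tm.bot := ⟨.co_bot1 x, .co_bot2 x⟩
theorem eqv_pr1 (a : Act) : Eqv (Tm.pre (some a) Tm.bot) Tm.bot := ⟨.pr1a a, .pr1b a⟩
theorem eqv_pr2 (x : Tm Act) : Eqv (Tm.pre none x) x := ⟨.pr2a x, .pr2b x⟩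
theorem eqv_pa_comm (A : Set Act) (x y : Tm Act) : Eqv (Tm.par A x y) (Tm.par A y x) :=
  ⟨.pa_comm A x y, .pa_comm A y x⟩
theorem eqv_pa_bot (A : Set Act) (x : Tm Act) : Eqv (Tm.par A x Tm.bot) Tm.bot :=
  ⟨.pa_bot1 A x, .pa_bot2 A x⟩

/-- Least upper bound property of disjunction. -/
theorem disj_lub {x y z : Tm Act} (h1 : Deriv x z) (h2 : Deriv y z) :
    Deriv (Tm.disj x y) z := (Deriv.disj_mono h1 h2).trans (Deriv.di_idem1 z)

theorem le_disj_left (x y : Tm Act) : Deriv x (Tm.disj x y) := .di_le x y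
theorem le_disj_right (x y : Tm Act) : Deriv y (Tm.disj x y) :=
  (Deriv.di_le y x).trans (Deriv.di_comm y x)

/-- foldl congruence for ec. -/
theorem foldl_ec_mono : ∀ {ts ts' : List (Tm Act)}, List.Forall₂ Deriv ts ts' →
    ∀ {a b : Tm Act}, Deriv a b → Deriv (ts.foldl Tm.ec a) (ts'.foldl Tm.ec b)
  | _, _, .nil, _, _, h => h
  | _, _, .cons hd tl, _, _, h => foldl_ec_mono tl (.ec_mono h hd)

theorem foldl_disj_mono : ∀ {ts ts' : List (Tm Act)}, List.Forall₂ Deriv ts ts' →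
    ∀ {a b : Tm Act}, Deriv a b → Deriv (ts.foldl Tm.disj a) (ts'.foldl Tm.disj b)
  | _, _, .nil, _, _, h => h
  | _, _, .cons hd tl, _, _, h => foldl_disj_mono tl (.disj_mono h hd)

theorem foldl_ec_eqv : ∀ (ts : List (Tm Act)) (a b : Tm Act),
    Eqv (ts.foldl Tm.ec (Tm.ec a b)) (Tm.ec a (ts.foldl Tm.ec b))
  | [], a, b => Eqv.refl _
  | t :: ts, a, b => by
    show Eqv (ts.foldl Tm.ec (Tm.ec (Tm.ec a b) t)) _
    have h1 : Eqv (ts.foldl Tm.ec (Tm.ec (Tm.ec a b) t)) (ts.foldl Tm.ec (Tm.ec a (Tm.ec b t))) :=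
      ⟨foldl_ec_mono (List.forall₂_same.2 fun x _ => .refl x) (eqv_ec_assoc a b t).1,
       foldl_ec_mono (List.forall₂_same.2 fun x _ => .refl x) (eqv_ec_assoc a b t).2⟩
    exact h1.trans (foldl_ec_eqv ts a (Tm.ec b t))

theorem foldl_disj_eqv : ∀ (ts : List (Tm Act)) (a b : Tm Act),
    Eqv (ts.foldl Tm.disj (Tm.disj a b)) (Tm.disj a (ts.foldl Tm.disj b))
  | [], a, b => Eqv.refl _
  | t :: ts, a, b => by
    show Eqv (ts.foldl Tm.disj (Tm.disj (Tm.disj a b) t)) _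
    have h1 : Eqv (ts.foldl Tm.disj (Tm.disj (Tm.disj a b) t))
        (ts.foldl Tm.disj (Tm.disj a (Tm.disj b t))) :=
      ⟨foldl_disj_mono (List.forall₂_same.2 fun x _ => .refl x) (eqv_di_assoc a b t).1,
       foldl_disj_mono (List.forall₂_same.2 fun x _ => .refl x) (eqv_di_assoc a b t).2⟩
    exact h1.trans (foldl_disj_eqv ts a (Tm.disj b t))

theorem bigEC_cons (t : Tm Act) (ts : List (Tm Act)) :
    Eqv (bigEC (t :: ts)) (Tm.ec t (bigEC ts)) := by
  cases ts with
  | nil => exact (eqv_ec_nil t).symm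
  | cons u us =>
    show Eqv (us.foldl Tm.ec (Tm.ec t u)) _
    exact foldl_ec_eqv us t u

theorem bigDisj_cons (t : Tm Act) {ts : List (Tm Act)} (h : ts ≠ []) :
    Eqv (bigDisj (t :: ts)) (Tm.disj t (bigDisj ts)) := by
  cases ts with
  | nil => exact absurd rfl h
  | cons u us =>
    show Eqv (us.foldl Tm.disj (Tm.disj t u)) _
    exact foldl_disj_eqv us t u

theorem bigEC_mono {ts ts' : List (Tm Act)} (h : List.Forall₂ Deriv ts ts') :
    Deriv (bigEC ts) (bigEC ts') := by
  cases h with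
  | nil => exact .refl _
  | cons hd tl => exact foldl_ec_mono tl hd

theorem bigEC_congr {ts ts' : List (Tm Act)} (h : List.Forall₂ Eqv ts ts') :
    Eqv (bigEC ts) (bigEC ts') :=
  ⟨bigEC_mono (h.imp fun _ _ hh => hh.1), bigEC_mono (h.flip.imp fun _ _ hh => hh.2)⟩

theorem bigDisj_mono {ts ts' : List (Tm Act)} (h : List.Forall₂ Deriv ts ts') :
    Deriv (bigDisj ts) (bigDisj ts') := by
  cases h with
  | nil => exact .refl _
  | cons hd tl => exact foldl_disj_mono tl hd

theorem bigDisj_congr {ts ts' : List (Tm Act)} (h : List.Forall₂ Eqv ts ts') :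
    Eqv (bigDisj ts) (bigDisj ts') :=
  ⟨bigDisj_mono (h.imp fun _ _ hh => hh.1), bigDisj_mono (h.flip.imp fun _ _ hh => hh.2)⟩

theorem bigEC_append : ∀ (l1 l2 : List (Tm Act)),
    Eqv (Tm.ec (bigEC l1) (bigEC l2)) (bigEC (l1 ++ l2))
  | [], l2 => (eqv_ec_comm _ _).trans (eqv_ec_nil _)
  | t :: l1, l2 => by
    have h1 := (bigEC_cons t l1).ecc (Eqv.refl (bigEC l2))
    have h2 := eqv_ec_assoc t (bigEC l1) (bigEC l2)
    have h3 := (Eqv.refl t).ecc (bigEC_append l1 l2)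
    have h4 := (bigEC_cons t (l1 ++ l2)).symm
    exact ((h1.trans h2).trans h3).trans h4

theorem bigDisj_append : ∀ (l1 l2 : List (Tm Act)), l1 ≠ [] → l2 ≠ [] →
    Eqv (Tm.disj (bigDisj l1) (bigDisj l2)) (bigDisj (l1 ++ l2))
  | [], _, h, _ => absurd rfl h
  | [t], l2, _, h2 => (bigDisj_cons t h2).symm
  | t :: u :: l1, l2, _, h2 => by
    have h1 := (bigDisj_cons t (ts := u :: l1) (by simp)).disjc (Eqv.refl (bigDisj l2))
    have h2' := eqv_di_assoc t (bigDisj (u :: l1)) (bigDisj l2)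
    have h3 := (Eqv.refl t).disjc (bigDisj_append (u :: l1) l2 (by simp) h2)
    have h4 := (bigDisj_cons t (ts := u :: l1 ++ l2) (by simp)).symm
    exact ((h1.trans h2').trans h3).trans h4

theorem bigEC_perm {ts ts' : List (Tm Act)} (h : ts.Perm ts') : Eqv (bigEC ts) (bigEC ts') := by
  induction h with
  | nil => exact Eqv.refl _
  | cons x _ ih => exact (bigEC_cons x _).trans (((Eqv.refl x).ecc ih).trans (bigEC_cons x _).symm)
  | swap x y l =>
    have h1 := bigEC_cons y (x :: l)
    have h2 := (Eqv.refl y).ecc (bigEC_cons x l)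
    have h3 := (eqv_ec_assoc y x (bigEC l)).symm
    have h4 := (eqv_ec_comm y x).ecc (Eqv.refl (bigEC l))
    have h5 := eqv_ec_assoc x y (bigEC l)
    have h6 := (Eqv.refl x).ecc (bigEC_cons y l).symm
    have h7 := (bigEC_cons x (y :: l)).symm
    exact (((((h1.trans h2).trans h3).trans h4).trans h5).trans h6).trans h7
  | trans _ _ ih1 ih2 => exact ih1.trans ih2

end CLL
namespace CLL
variable {Act : Type}

theorem forall₂_map_eqv {α : Type*} {f g : α → Tm Act} : ∀ (l : List α),
    (∀ a ∈ l, Eqv (f a) (g a)) → List.Forall₂ Eqv (l.map f) (l.map g)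
  | [], _ => .nil
  | a :: l, h => .cons (h a (by simp)) (forall₂_map_eqv l fun a ha => h a (by simp [ha]))

theorem bigDisj_join : ∀ (lss : List (List (Tm Act))), (∀ l ∈ lss, l ≠ []) →
    Eqv (bigDisj (lss.map bigDisj)) (bigDisj lss.flatten)
  | [], _ => Eqv.refl _
  | [l], _ => by simp; exact Eqv.refl _
  | l :: l' :: lss, h => by
    have hl : l ≠ [] := h l (by simp)
    have hrest : ∀ m ∈ l' :: lss, m ≠ [] := fun m hm => h m (by simp [hm])
    have hjoin : (l' :: lss).flatten ≠ [] := by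
      have : l' ≠ [] := hrest l' (by simp)
      cases l' with
      | nil => exact absurd rfl this
      | cons a l' => simp
    have h1 := bigDisj_cons (bigDisj l) (ts := (l' :: lss).map bigDisj) (by simp)
    have h2 := (Eqv.refl (bigDisj l)).disjc (bigDisj_join (l' :: lss) hrest)
    have h3 := bigDisj_append l ((l' :: lss).flatten) hl hjoin
    show Eqv (bigDisj (bigDisj l :: (l' :: lss).map bigDisj)) (bigDisj (l ++ (l' :: lss).flatten))
    exact (h1.trans h2).trans h3

theorem op_bigDisj_right (op : Tm Act → Tm Act → Tm Act)
    (mono : ∀ {a b c d : Tm Act}, Deriv a b → Deriv c d → Deriv (op a c) (op b d))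
    (dis : ∀ x y z : Tm Act, Deriv (op x (Tm.disj y z)) (Tm.disj (op x y) (op x z))) :
    ∀ (ts : List (Tm Act)), ts ≠ [] → ∀ x,
      Eqv (op x (bigDisj ts)) (bigDisj (ts.map (op x)))
  | [], h, _ => absurd rfl h
  | [t], _, x => Eqv.refl _
  | t :: u :: ts, _, x => by
    have hne : (u :: ts) ≠ [] := by simp
    have h1 : Eqv (op x (bigDisj (t :: u :: ts))) (op x (Tm.disj t (bigDisj (u :: ts)))) :=
      ⟨mono (.refl x) (bigDisj_cons t hne).1, mono (.refl x) (bigDisj_cons t hne).2⟩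
    have h2 : Eqv (op x (Tm.disj t (bigDisj (u :: ts))))
        (Tm.disj (op x t) (op x (bigDisj (u :: ts)))) :=
      ⟨dis _ _ _, disj_lub (mono (.refl x) (le_disj_left _ _))
        (mono (.refl x) (le_disj_right _ _))⟩
    have h3 := (Eqv.refl (op x t)).disjc (op_bigDisj_right op @mono dis (u :: ts) hne x)
    have h4 : Eqv (Tm.disj (op x t) (bigDisj ((u :: ts).map (op x))))
        (bigDisj ((t :: u :: ts).map (op x))) := (bigDisj_cons (op x t) (by simp)).symm
    exact ((h1.trans h2).trans h3).trans h4

theorem op_bigDisj_distrib (op : Tm Act → Tm Act → Tm Act)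
    (mono : ∀ {a b c d : Tm Act}, Deriv a b → Deriv c d → Deriv (op a c) (op b d))
    (comm : ∀ x y : Tm Act, Deriv (op x y) (op y x))
    (dis : ∀ x y z : Tm Act, Deriv (op x (Tm.disj y z)) (Tm.disj (op x y) (op x z)))
    (ts1 ts2 : List (Tm Act)) (h1 : ts1 ≠ []) (h2 : ts2 ≠ []) :
    Eqv (op (bigDisj ts1) (bigDisj ts2))
      (bigDisj ((ts1.map fun a => ts2.map fun b => op a b).flatten)) := by
  have step1 : Eqv (op (bigDisj ts1) (bigDisj ts2))
      (bigDisj (ts1.map fun a => op a (bigDisj ts2))) := by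
    have c1 : Eqv (op (bigDisj ts1) (bigDisj ts2)) (op (bigDisj ts2) (bigDisj ts1)) :=
      ⟨comm _ _, comm _ _⟩
    have c2 := op_bigDisj_right op @mono dis ts1 h1 (bigDisj ts2)
    have c3 : Eqv (bigDisj (ts1.map (op (bigDisj ts2))))
        (bigDisj (ts1.map fun a => op a (bigDisj ts2))) :=
      bigDisj_congr (forall₂_map_eqv ts1 fun a _ => ⟨comm _ _, comm _ _⟩)
    exact (c1.trans c2).trans c3
  have step2 : Eqv (bigDisj (ts1.map fun a => op a (bigDisj ts2)))
      (bigDisj (ts1.map fun a => bigDisj (ts2.map fun b => op a b))) :=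
    bigDisj_congr (forall₂_map_eqv ts1 fun a _ => op_bigDisj_right op @mono dis ts2 h2 a)
  have step3 : Eqv (bigDisj ((ts1.map fun a => ts2.map fun b => op a b).map bigDisj))
      (bigDisj ((ts1.map fun a => ts2.map fun b => op a b).flatten)) := by
    apply bigDisj_join
    intro l hl
    rcases List.mem_map.1 hl with ⟨a, _, rfl⟩
    intro hcon
    exact h2 (List.map_eq_nil_iff.1 hcon)
  rw [List.map_map] at step3
  exact (step1.trans step2).trans step3

theorem foldl_size_le (op : Tm Act → Tm Act → Tm Act)
    (h : ∀ a b : Tm Act, sizeOf a ≤ sizeOf (op a b) ∧ sizeOf b ≤ sizeOf (op a b)) :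
    ∀ (ts : List (Tm Act)) (acc : Tm Act),
      sizeOf acc ≤ sizeOf (ts.foldl op acc) ∧ ∀ t ∈ ts, sizeOf t ≤ sizeOf (ts.foldl op acc)
  | [], acc => ⟨le_refl _, by simp⟩
  | t :: ts, acc => by
    have ih := foldl_size_le op h ts (op acc t)
    refine ⟨le_trans (h acc t).1 ih.1, ?_⟩
    intro u hu
    rcases List.mem_cons.1 hu with rfl | hu
    · exact le_trans (h acc u).2 ih.1
    · exact ih.2 u hu

theorem size_disj (a b : Tm Act) : sizeOf a ≤ sizeOf (Tm.disj a b) ∧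
    sizeOf b ≤ sizeOf (Tm.disj a b) := by constructor <;> simp <;> omega

theorem size_ec (a b : Tm Act) : sizeOf a ≤ sizeOf (Tm.ec a b) ∧
    sizeOf b ≤ sizeOf (Tm.ec a b) := by constructor <;> simp <;> omega

theorem mem_bigDisj_size {t : Tm Act} : ∀ {ts : List (Tm Act)}, t ∈ ts →
    sizeOf t ≤ sizeOf (bigDisj ts) := by
  intro ts ht
  cases ts with
  | nil => cases ht
  | cons u us =>
    rcases List.mem_cons.1 ht with rfl | ht
    · exact (foldl_size_le Tm.disj size_disj us t).1
    · exact (foldl_size_le Tm.disj size_disj us u).2 t ht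

theorem mem_bigEC_size {t : Tm Act} : ∀ {ts : List (Tm Act)}, t ∈ ts →
    sizeOf t ≤ sizeOf (bigEC ts) := by
  intro ts ht
  cases ts with
  | nil => cases ht
  | cons u us =>
    rcases List.mem_cons.1 ht with rfl | ht
    · exact (foldl_size_le Tm.ec size_ec us t).1
    · exact (foldl_size_le Tm.ec size_ec us u).2 t ht

theorem mem_ecPre_size {a : Act} {x : Tm Act} {l : List (Act × Tm Act)}
    (h : (a, x) ∈ l) : sizeOf x < sizeOf (ecPre l) := by
  have hm : Tm.pre (some a) x ∈ l.map fun p => Tm.pre (some p.1) p.2 :=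
    List.mem_map.2 ⟨(a, x), h, rfl⟩
  have h1 := mem_bigEC_size hm
  have h2 : sizeOf x < sizeOf (Tm.pre (some a) x) := by simp
  exact lt_of_lt_of_le h2 h1

theorem basic_foldl_ec : ∀ (ts : List (Tm Act)) (acc : Tm Act), Basic acc →
    (∀ t ∈ ts, Basic t) → Basic (ts.foldl Tm.ec acc)
  | [], acc, ha, _ => ha
  | t :: ts, acc, ha, h => basic_foldl_ec ts _ (.ec ha (h t (by simp)))
      (fun u hu => h u (by simp [hu]))

theorem basic_bigEC {ts : List (Tm Act)} (h : ∀ t ∈ ts, Basic t) : Basic (bigEC ts) := by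
  cases ts with
  | nil => exact .nil
  | cons t ts => exact basic_foldl_ec ts t (h t (by simp)) (fun u hu => h u (by simp [hu]))

theorem basic_foldl_disj : ∀ (ts : List (Tm Act)) (acc : Tm Act), Basic acc →
    (∀ t ∈ ts, Basic t) → Basic (ts.foldl Tm.disj acc)
  | [], acc, ha, _ => ha
  | t :: ts, acc, ha, h => basic_foldl_disj ts _ (.disj ha (h t (by simp)))
      (fun u hu => h u (by simp [hu]))

theorem basic_bigDisj {ts : List (Tm Act)} (h : ∀ t ∈ ts, Basic t) : Basic (bigDisj ts) := by
  cases ts with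
  | nil => exact .nil
  | cons t ts => exact basic_foldl_disj ts t (h t (by simp)) (fun u hu => h u (by simp [hu]))

theorem basic_ecPre {l : List (Act × Tm Act)} (h : ∀ p ∈ l, Basic p.2) :
    Basic (ecPre l) := by
  apply basic_bigEC
  intro t ht
  rcases List.mem_map.1 ht with ⟨p, hp, rfl⟩
  exact .pre _ (h p hp)

theorem NFB.basic {t : Tm Act} (h : NFB t) : Basic t := by
  induction h with
  | mk ls hne hnd hb ih =>
    apply basic_bigDisj
    intro u hu
    rcases List.mem_map.1 hu with ⟨l, hl, rfl⟩
    exact basic_ecPre fun p hp => ih l hl p hp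

theorem ecPre_perm {l l' : List (Act × Tm Act)} (h : l.Perm l') :
    Eqv (ecPre l) (ecPre l') := bigEC_perm (h.map _)

theorem NFB_ecPre {l : List (Act × Tm Act)} (hnd : (l.map Prod.fst).Nodup)
    (hb : ∀ p ∈ l, NFB p.2) : NFB (ecPre l) := by
  have := NFB.mk [l] (by simp) (by simpa using hnd) (by simpa using hb)
  simpa [bigDisj] using this

theorem NFB_nil : NFB (Tm.nil : Tm Act) := by
  have := NFB.mk ([[]] : List (List (Act × Tm Act))) (by simp) (by simp) (by simp)
  simpa [bigDisj, ecPre, bigEC] using this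

theorem NFB_disj {u v : Tm Act} (hu : NFB u) (hv : NFB v) :
    ∃ w : Tm Act, NFB w ∧ Eqv (Tm.disj u v) w := by
  rcases hu with ⟨ls1, hne1, hnd1, hb1⟩
  rcases hv with ⟨ls2, hne2, hnd2, hb2⟩
  refine ⟨bigDisj ((ls1 ++ ls2).map ecPre), NFB.mk _ (by simp [hne1]) ?_ ?_, ?_⟩
  · intro l hl; rcases List.mem_append.1 hl with h | h
    exacts [hnd1 l h, hnd2 l h]
  · intro l hl; rcases List.mem_append.1 hl with h | h
    exacts [hb1 l h, hb2 l h]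
  · rw [List.map_append]
    exact bigDisj_append _ _ (by simpa using hne1) (by simpa using hne2)

theorem eqv_bot_disj (x : Tm Act) : Eqv (Tm.disj Tm.bot x) x :=
  (eqv_di_comm _ _).trans (eqv_di_bot x)

theorem combine_disj : ∀ (ts : List (Tm Act)), (∀ t ∈ ts, ∃ s, NF s ∧ Eqv t s) →
    ∃ s : Tm Act, NF s ∧ Eqv (bigDisj ts) s
  | [], _ => ⟨Tm.nil, Or.inr NFB_nil, Eqv.refl _⟩
  | [t], h => h t (by simp)
  | t :: u :: ts, h => by
    obtain ⟨s1, hs1, he1⟩ := h t (by simp)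
    obtain ⟨s2, hs2, he2⟩ := combine_disj (u :: ts) (fun r hr => h r (by simp [hr]))
    have hc : Eqv (bigDisj (t :: u :: ts)) (Tm.disj s1 s2) :=
      (bigDisj_cons t (by simp)).trans (he1.disjc he2)
    rcases hs1 with rfl | hb1
    · rcases hs2 with rfl | hb2
      · exact ⟨Tm.bot, Or.inl rfl, hc.trans (eqv_bot_disj _)⟩
      · exact ⟨s2, Or.inr hb2, hc.trans (eqv_bot_disj _)⟩
    · rcases hs2 with rfl | hb2
      · exact ⟨s1, Or.inr hb1, hc.trans (eqv_di_bot _)⟩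
      · obtain ⟨w, hw, hew⟩ := NFB_disj hb1 hb2
        exact ⟨w, Or.inr hw, hc.trans hew⟩

end CLL
namespace CLL
attribute [local instance] Classical.propDecidable
variable {Act : Type}

theorem eqv_bot_ec (x : Tm Act) : Eqv (Tm.ec Tm.bot x) Tm.bot :=
  (eqv_ec_comm _ _).trans (eqv_ec_bot x)
theorem eqv_bot_co (x : Tm Act) : Eqv (Tm.conj Tm.bot x) Tm.bot :=
  (eqv_co_comm _ _).trans (eqv_co_bot x)
theorem eqv_bot_pa (A : Set Act) (x : Tm Act) : Eqv (Tm.par A Tm.bot x) Tm.bot :=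
  (eqv_pa_comm A _ _).trans (eqv_pa_bot A x)

/-- `a.x □ a.y = a.(x ∨ y)` for basic `x`, `y`. -/
theorem ds4_eqv (a : Act) {x y : Tm Act} (hx : Basic x) (hy : Basic y) :
    Eqv (Tm.ec (Tm.pre (some a) x) (Tm.pre (some a) y)) (Tm.pre (some a) (Tm.disj x y)) := by
  constructor
  · have h1 : Deriv (Tm.pre (some a) x) (Tm.pre (some a) (Tm.disj x y)) :=
      .pre_mono _ (le_disj_left x y)
    have h2 : Deriv (Tm.pre (some a) y) (Tm.pre (some a) (Tm.disj x y)) :=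
      .pre_mono _ (le_disj_right x y)
    exact (Deriv.ec_mono h1 h2).trans (.ec_idem1 _)
  · exact .ds4 a hx hy

theorem insert_ec (l : List (Act × Tm Act)) (a : Act) (y : Tm Act)
    (hnd : (l.map Prod.fst).Nodup) (hb : ∀ p ∈ l, NFB p.2) (hy : NFB y) :
    ∃ l' : List (Act × Tm Act), (l'.map Prod.fst).Nodup ∧ (∀ p ∈ l', NFB p.2) ∧
      Eqv (Tm.ec (ecPre l) (Tm.pre (some a) y)) (ecPre l') := by
  by_cases hmem : a ∈ l.map Prod.fst
  · rcases List.mem_map.1 hmem with ⟨p, hp, hpa⟩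
    obtain ⟨s, t, rfl⟩ := List.append_of_mem hp
    obtain ⟨a', x⟩ := p
    cases hpa
    set r : List (Act × Tm Act) := s ++ t with hr
    have hx : NFB x := hb (a', x) (by simp)
    have hbr : ∀ q ∈ r, NFB q.2 := fun q hq => hb q (by
      rcases List.mem_append.1 hq with h | h
      · exact List.mem_append.2 (Or.inl h)
      · exact List.mem_append.2 (Or.inr (List.mem_cons.2 (Or.inr h))))
    have hperm : (s ++ (a', x) :: t).Perm ((a', x) :: r) := List.perm_middle
    have hndr : (((a', x) :: r).map Prod.fst).Nodup := (hperm.map Prod.fst).nodup hnd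
    obtain ⟨z, hz, hez⟩ := NFB_disj hx hy
    refine ⟨(a', z) :: r, ?_, ?_, ?_⟩
    · simpa using hndr
    · intro q hq
      rcases List.mem_cons.1 hq with rfl | hq
      exacts [hz, hbr q hq]
    · -- the derivation
      have e1 : Eqv (ecPre (s ++ (a', x) :: t)) (ecPre ((a', x) :: r)) := ecPre_perm hperm
      have e2 : Eqv (ecPre ((a', x) :: r)) (Tm.ec (Tm.pre (some a') x) (ecPre r)) := by
        show Eqv (bigEC (Tm.pre (some a') x :: r.map fun p => Tm.pre (some p.1) p.2)) _
        exact bigEC_cons _ _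
      have e3 : Eqv (Tm.ec (ecPre (s ++ (a', x) :: t)) (Tm.pre (some a') y))
          (Tm.ec (Tm.ec (Tm.pre (some a') x) (ecPre r)) (Tm.pre (some a') y)) :=
        (e1.trans e2).ecc (Eqv.refl _)
      have e4 : Eqv (Tm.ec (Tm.ec (Tm.pre (some a') x) (ecPre r)) (Tm.pre (some a') y))
          (Tm.ec (Tm.ec (Tm.pre (some a') x) (Tm.pre (some a') y)) (ecPre r)) :=
        ((eqv_ec_assoc _ _ _).trans ((Eqv.refl _).ecc (eqv_ec_comm _ _))).trans
          (eqv_ec_assoc _ _ _).symm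
      have e5 : Eqv (Tm.ec (Tm.ec (Tm.pre (some a') x) (Tm.pre (some a') y)) (ecPre r))
          (Tm.ec (Tm.pre (some a') z) (ecPre r)) :=
        (((ds4_eqv a' hx.basic hy.basic).trans (hez.prec _)).ecc (Eqv.refl _))
      have e6 : Eqv (Tm.ec (Tm.pre (some a') z) (ecPre r)) (ecPre ((a', z) :: r)) := by
        show Eqv _ (bigEC (Tm.pre (some a') z :: r.map fun p => Tm.pre (some p.1) p.2))
        exact (bigEC_cons _ _).symm
      exact ((e3.trans e4).trans e5).trans e6
  · refine ⟨l ++ [(a, y)], ?_, ?_, ?_⟩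
    · rw [List.map_append]
      exact (List.perm_append_singleton a (l.map Prod.fst)).nodup_iff.2
        (List.nodup_cons.2 ⟨hmem, hnd⟩)
    · intro q hq
      rcases List.mem_append.1 hq with h | h
      · exact hb q h
      · simp at h; subst h; exact hy
    · show Eqv (Tm.ec (ecPre l) (ecPre [(a, y)])) (ecPre (l ++ [(a, y)]))
      unfold ecPre
      rw [List.map_append]
      exact bigEC_append _ _

theorem merge_ec : ∀ (l2 l1 : List (Act × Tm Act)),
    (l1.map Prod.fst).Nodup → (∀ p ∈ l1, NFB p.2) → (∀ p ∈ l2, NFB p.2) →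
    ∃ l : List (Act × Tm Act), (l.map Prod.fst).Nodup ∧ (∀ p ∈ l, NFB p.2) ∧
      Eqv (Tm.ec (ecPre l1) (ecPre l2)) (ecPre l)
  | [], l1, hnd1, hb1, _ => ⟨l1, hnd1, hb1, eqv_ec_nil _⟩
  | (b, y) :: l2, l1, hnd1, hb1, hb2 => by
    have hy : NFB y := hb2 (b, y) (by simp)
    obtain ⟨l1', hnd', hb', he'⟩ := insert_ec l1 b y hnd1 hb1 hy
    obtain ⟨l, hnd, hb, he⟩ := merge_ec l2 l1' hnd' hb' (fun q hq => hb2 q (by simp [hq]))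
    refine ⟨l, hnd, hb, ?_⟩
    have e1 : Eqv (ecPre ((b, y) :: l2)) (Tm.ec (Tm.pre (some b) y) (ecPre l2)) := by
      show Eqv (bigEC (Tm.pre (some b) y :: l2.map fun p => Tm.pre (some p.1) p.2)) _
      exact bigEC_cons _ _
    have e2 : Eqv (Tm.ec (ecPre l1) (ecPre ((b, y) :: l2)))
        (Tm.ec (Tm.ec (ecPre l1) (Tm.pre (some b) y)) (ecPre l2)) :=
      ((Eqv.refl _).ecc e1).trans (eqv_ec_assoc _ _ _).symm
    exact (e2.trans (he'.ecc (Eqv.refl _))).trans he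

theorem nf_ec_combine {t1 t2 s1 s2 : Tm Act} (h1 : NF s1) (h2 : NF s2)
    (e1 : Eqv t1 s1) (e2 : Eqv t2 s2) : ∃ w, NF w ∧ Eqv (Tm.ec t1 t2) w := by
  have hc : Eqv (Tm.ec t1 t2) (Tm.ec s1 s2) := e1.ecc e2
  rcases h1 with rfl | hb1
  · exact ⟨Tm.bot, Or.inl rfl, hc.trans (eqv_bot_ec _)⟩
  rcases h2 with rfl | hb2
  · exact ⟨Tm.bot, Or.inl rfl, hc.trans (eqv_ec_bot _)⟩
  -- both NFB: distribute
  obtain ⟨ls1, hne1, hnd1, hb1'⟩ := hb1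
  obtain ⟨ls2, hne2, hnd2, hb2'⟩ := hb2
  have hdis := op_bigDisj_distrib Tm.ec (fun h1 h2 => .ec_mono h1 h2)
    (fun x y => .ec_comm x y) (fun x y z => .ds1 x y z)
    (ls1.map ecPre) (ls2.map ecPre) (by simpa using hne1) (by simpa using hne2)
  obtain ⟨s, hs, he⟩ := combine_disj
    (((ls1.map ecPre).map fun a => (ls2.map ecPre).map fun b => Tm.ec a b).flatten)
    (fun t ht => by
    rcases List.mem_flatten.1 ht with ⟨L, hL, htL⟩
    rcases List.mem_map.1 hL with ⟨A, hA, rfl⟩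
    rcases List.mem_map.1 htL with ⟨B, hB, rfl⟩
    rcases List.mem_map.1 hA with ⟨l1, hl1, rfl⟩
    rcases List.mem_map.1 hB with ⟨l2, hl2, rfl⟩
    obtain ⟨l, hnd, hbs, hel⟩ := merge_ec l2 l1 (hnd1 _ hl1) (hb1' _ hl1) (hb2' _ hl2)
    exact ⟨ecPre l, Or.inr (NFB_ecPre hnd hbs), hel⟩)
  exact ⟨s, hs, (hc.trans hdis).trans he⟩

theorem nf_pre_combine (a : Act) {t s : Tm Act} (hs : NF s) (he : Eqv t s) :
    ∃ w, NF w ∧ Eqv (Tm.pre (some a) t) w := by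
  rcases hs with rfl | hb
  · exact ⟨Tm.bot, Or.inl rfl, (he.prec (some a)).trans (eqv_pr1 a)⟩
  · refine ⟨Tm.pre (some a) s, Or.inr ?_, he.prec (some a)⟩
    have := NFB_ecPre (l := [(a, s)]) (by simp) (by simpa using hb)
    simpa [ecPre, bigEC] using this

theorem combine_ec : ∀ (ts : List (Tm Act)), (∀ t ∈ ts, ∃ s, NF s ∧ Eqv t s) →
    ∃ s : Tm Act, NF s ∧ Eqv (bigEC ts) s
  | [], _ => ⟨Tm.nil, Or.inr NFB_nil, Eqv.refl _⟩
  | t :: ts, h => by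
    obtain ⟨s1, hs1, he1⟩ := h t (by simp)
    obtain ⟨s2, hs2, he2⟩ := combine_ec ts (fun r hr => h r (by simp [hr]))
    obtain ⟨w, hw, hew⟩ := nf_ec_combine hs1 hs2 he1 he2
    exact ⟨w, hw, (bigEC_cons t ts).trans hew⟩

theorem renorm_ecPre : ∀ (l : List (Act × Tm Act)),
    (∀ p ∈ l, ∃ s, NF s ∧ Eqv p.2 s) →
    (∃ l' : List (Act × Tm Act), l'.map Prod.fst = l.map Prod.fst ∧
      (∀ p ∈ l', NFB p.2) ∧ Eqv (ecPre l) (ecPre l')) ∨ Eqv (ecPre l) Tm.bot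
  | [], _ => Or.inl ⟨[], rfl, by simp, Eqv.refl _⟩
  | (a, x) :: l, h => by
    obtain ⟨s, hs, hes⟩ := h (a, x) (by simp)
    have hcons : Eqv (ecPre ((a, x) :: l)) (Tm.ec (Tm.pre (some a) x) (ecPre l)) := by
      show Eqv (bigEC (Tm.pre (some a) x :: l.map fun p => Tm.pre (some p.1) p.2)) _
      exact bigEC_cons _ _
    rcases hs with rfl | hb
    · refine Or.inr (hcons.trans ?_)
      have : Eqv (Tm.pre (some a) x) Tm.bot := (hes.prec (some a)).trans (eqv_pr1 a)
      exact (this.ecc (Eqv.refl _)).trans (eqv_bot_ec _)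
    · rcases renorm_ecPre l (fun p hp => h p (by simp [hp])) with ⟨l', hf, hbs, hel⟩ | hbot
      · refine Or.inl ⟨(a, s) :: l', by simpa using hf, ?_, ?_⟩
        · intro q hq
          rcases List.mem_cons.1 hq with rfl | hq
          exacts [hb, hbs q hq]
        · have e2 : Eqv (Tm.ec (Tm.pre (some a) x) (ecPre l))
              (Tm.ec (Tm.pre (some a) s) (ecPre l')) := (hes.prec _).ecc hel
          have e3 : Eqv (Tm.ec (Tm.pre (some a) s) (ecPre l')) (ecPre ((a, s) :: l')) := by
            show Eqv _ (bigEC (Tm.pre (some a) s :: l'.map fun p => Tm.pre (some p.1) p.2))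
            exact (bigEC_cons _ _).symm
          exact (hcons.trans e2).trans e3
      · exact Or.inr (hcons.trans (((Eqv.refl _).ecc hbot).trans (eqv_ec_bot _)))

theorem align_perm : ∀ (l1 l2 : List (Act × Tm Act)),
    (l1.map Prod.fst).Nodup → (l2.map Prod.fst).Nodup →
    (∀ a : Act, a ∈ l1.map Prod.fst ↔ a ∈ l2.map Prod.fst) →
    ∃ l2' : List (Act × Tm Act), l2.Perm l2' ∧ l2'.map Prod.fst = l1.map Prod.fst
  | [], l2, _, _, hiff => by
    cases l2 with
    | nil => exact ⟨[], .refl _, rfl⟩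
    | cons p l2 => exact absurd ((hiff p.1).2 (by simp)) (by simp)
  | (a, x) :: r, l2, hnd1, hnd2, hiff => by
    have ha : a ∈ l2.map Prod.fst := (hiff a).1 (by simp)
    rcases List.mem_map.1 ha with ⟨p, hp, hp1⟩
    obtain ⟨s, t, rfl⟩ := List.append_of_mem hp
    have hperm : (s ++ p :: t).Perm (p :: (s ++ t)) := List.perm_middle
    have hnd2' : ((p :: (s ++ t)).map Prod.fst).Nodup := (hperm.map Prod.fst).nodup hnd2
    have hpnotin : p.1 ∉ (s ++ t).map Prod.fst := by
      simp only [List.map_cons, List.nodup_cons] at hnd2'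
      exact hnd2'.1
    have hndst : ((s ++ t).map Prod.fst).Nodup := by
      simp only [List.map_cons, List.nodup_cons] at hnd2'
      exact hnd2'.2
    have hanotr : a ∉ r.map Prod.fst := by
      simp only [List.map_cons, List.nodup_cons] at hnd1
      exact hnd1.1
    have hndr : (r.map Prod.fst).Nodup := by
      simp only [List.map_cons, List.nodup_cons] at hnd1
      exact hnd1.2
    have hiff' : ∀ b : Act, b ∈ r.map Prod.fst ↔ b ∈ (s ++ t).map Prod.fst := by
      intro b
      constructor
      · intro hb
        have hbne : b ≠ a := fun h => hanotr (h ▸ hb)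
        have : b ∈ (s ++ p :: t).map Prod.fst := (hiff b).1
          (by rw [List.map_cons]; exact List.mem_cons.2 (Or.inr hb))
        have : b ∈ (p :: (s ++ t)).map Prod.fst := (hperm.map Prod.fst).mem_iff.1 this
        rcases List.mem_cons.1 this with h | h
        · exact absurd (h.trans hp1) hbne
        · exact h
      · intro hb
        have hbne : b ≠ p.1 := fun h => hpnotin (h ▸ hb)
        have : b ∈ (s ++ p :: t).map Prod.fst :=
          (hperm.map Prod.fst).mem_iff.2
            (by rw [List.map_cons]; exact List.mem_cons.2 (Or.inr hb))
        have := (hiff b).2 this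
        rcases List.mem_cons.1 this with h | h
        · exact absurd (h.trans hp1.symm) hbne
        · exact h
    obtain ⟨rest', hpr, hfr⟩ := align_perm r (s ++ t) hndr hndst hiff'
    refine ⟨p :: rest', hperm.trans (hpr.cons p), ?_⟩
    simp [hfr, hp1]

theorem zip_pairs : ∀ (l1 l2 : List (Act × Tm Act)), l1.map Prod.fst = l2.map Prod.fst →
    ∃ l : List (Act × Tm Act × Tm Act),
      (l.map fun p => (p.1, p.2.1)) = l1 ∧ (l.map fun p => (p.1, p.2.2)) = l2 ∧
      l.map Prod.fst = l1.map Prod.fst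
  | [], [], _ => ⟨[], rfl, rfl, rfl⟩
  | [], p :: l2, h => by simp at h
  | p :: l1, [], h => by simp at h
  | (a, x) :: l1, (b, y) :: l2, h => by
    simp only [List.map_cons, List.cons.injEq] at h
    obtain ⟨rfl, h⟩ := h
    obtain ⟨l, h1, h2, h3⟩ := zip_pairs l1 l2 h
    exact ⟨(a, x, y) :: l, by simp [h1], by simp [h2], by simp [h3]⟩

end CLL
namespace CLL
attribute [local instance] Classical.propDecidable
variable {Act : Type}

theorem conj_ecPre_norm (n : ℕ)
    (ih : ∀ m, m < n → ∀ u v : Tm Act, NFB u → NFB v → sizeOf u + sizeOf v ≤ m →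
      ∃ w, NF w ∧ Eqv (Tm.conj u v) w)
    (l1 l2 : List (Act × Tm Act))
    (hnd1 : (l1.map Prod.fst).Nodup) (hnd2 : (l2.map Prod.fst).Nodup)
    (hb1 : ∀ p ∈ l1, NFB p.2) (hb2 : ∀ p ∈ l2, NFB p.2)
    (hsz : sizeOf (ecPre l1) + sizeOf (ecPre l2) ≤ n) :
    ∃ s, NF s ∧ Eqv (Tm.conj (ecPre l1) (ecPre l2)) s := by
  by_cases heq : ∀ a : Act, a ∈ l1.map Prod.fst ↔ a ∈ l2.map Prod.fst
  · obtain ⟨l2', hperm, hfst⟩ := align_perm l1 l2 hnd1 hnd2 heq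
    obtain ⟨L, hL1, hL2, hLf⟩ := zip_pairs l1 l2' hfst.symm
    have hndL : (L.map Prod.fst).Nodup := by rw [hLf]; exact hnd1
    have e0 : Eqv (Tm.conj (ecPre l1) (ecPre l2)) (Tm.conj (ecPre l1) (ecPre l2')) :=
      (Eqv.refl _).conjc (ecPre_perm hperm)
    have e1 : Eqv (Tm.conj (ecPre l1) (ecPre l2'))
        (ecPre (L.map fun p => (p.1, Tm.conj p.2.1 p.2.2))) := by
      have d2 := Deriv.ecc2 (Act := Act) L
      have d3 := Deriv.ecc3 (Act := Act) L hndL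
      rw [hL1, hL2] at d2 d3
      exact ⟨d3, d2⟩
    have hre := renorm_ecPre (L.map fun p => (p.1, Tm.conj p.2.1 p.2.2)) (by
      intro p hp
      rcases List.mem_map.1 hp with ⟨q, hq, rfl⟩
      have hx : (q.1, q.2.1) ∈ l1 := hL1 ▸ List.mem_map.2 ⟨q, hq, rfl⟩
      have hy' : (q.1, q.2.2) ∈ l2' := hL2 ▸ List.mem_map.2 ⟨q, hq, rfl⟩
      have hy : (q.1, q.2.2) ∈ l2 := hperm.mem_iff.2 hy'
      have hbx : NFB q.2.1 := hb1 _ hx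
      have hby : NFB q.2.2 := hb2 _ hy
      have hsx : sizeOf q.2.1 < sizeOf (ecPre l1) := mem_ecPre_size hx
      have hsy : sizeOf q.2.2 < sizeOf (ecPre l2) := mem_ecPre_size hy
      exact ih (sizeOf q.2.1 + sizeOf q.2.2) (by omega) _ _ hbx hby (le_refl _))
    rcases hre with ⟨l', hf, hbs, hel⟩ | hbot
    · refine ⟨ecPre l', Or.inr (NFB_ecPre ?_ hbs), (e0.trans e1).trans hel⟩
      rw [hf]
      have hmm : ((L.map fun p => (p.1, Tm.conj p.2.1 p.2.2)).map Prod.fst)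
          = L.map Prod.fst := by rw [List.map_map]; rfl
      rw [hmm]; exact hndL
    · exact ⟨Tm.bot, Or.inl rfl, (e0.trans e1).trans hbot⟩
  · refine ⟨Tm.bot, Or.inl rfl, ⟨.ecc1a l1 l2 ?_, .ecc1b l1 l2 ?_⟩⟩ <;>
    · intro h
      exact heq fun a => by have := Set.ext_iff.1 h a; simpa using this

theorem conj_norm : ∀ (n : ℕ) (u v : Tm Act), NFB u → NFB v → sizeOf u + sizeOf v ≤ n →
    ∃ w, NF w ∧ Eqv (Tm.conj u v) w := by
  intro n
  induction n using Nat.strong_induction_on with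
  | _ n ih =>
  intro u v hu hv hsz
  obtain ⟨ls1, hne1, hnd1, hb1⟩ := hu
  obtain ⟨ls2, hne2, hnd2, hb2⟩ := hv
  have hdis := op_bigDisj_distrib Tm.conj (fun h1 h2 => .conj_mono h1 h2)
    (fun x y => .co_comm x y) (fun x y z => .ds2 x y z)
    (ls1.map ecPre) (ls2.map ecPre) (by simpa using hne1) (by simpa using hne2)
  obtain ⟨s, hs, he⟩ := combine_disj
    (((ls1.map ecPre).map fun a => (ls2.map ecPre).map fun b => Tm.conj a b).flatten)
    (fun t ht => by
      rcases List.mem_flatten.1 ht with ⟨Lm, hLm, htL⟩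
      rcases List.mem_map.1 hLm with ⟨X, hX, rfl⟩
      rcases List.mem_map.1 htL with ⟨Y, hY, rfl⟩
      rcases List.mem_map.1 hX with ⟨l1, hl1, rfl⟩
      rcases List.mem_map.1 hY with ⟨l2, hl2, rfl⟩
      have hs1 : sizeOf (ecPre l1) ≤ sizeOf (bigDisj (ls1.map ecPre)) :=
        mem_bigDisj_size (List.mem_map.2 ⟨l1, hl1, rfl⟩)
      have hs2 : sizeOf (ecPre l2) ≤ sizeOf (bigDisj (ls2.map ecPre)) :=
        mem_bigDisj_size (List.mem_map.2 ⟨l2, hl2, rfl⟩)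
      exact conj_ecPre_norm n ih l1 l2 (hnd1 _ hl1) (hnd2 _ hl2) (hb1 _ hl1) (hb2 _ hl2)
        (by omega))
  exact ⟨s, hs, hdis.trans he⟩

theorem par_ecPre_norm (n : ℕ)
    (ih : ∀ m, m < n → ∀ (A : Set Act) (u v : Tm Act), NFB u → NFB v →
      sizeOf u + sizeOf v ≤ m → ∃ w, NF w ∧ Eqv (Tm.par A u v) w)
    (A : Set Act) (l1 l2 : List (Act × Tm Act))
    (hnd1 : (l1.map Prod.fst).Nodup) (hnd2 : (l2.map Prod.fst).Nodup)
    (hb1 : ∀ p ∈ l1, NFB p.2) (hb2 : ∀ p ∈ l2, NFB p.2)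
    (hsz : sizeOf (ecPre l1) + sizeOf (ecPre l2) ≤ n) :
    ∃ s, NF s ∧ Eqv (Tm.par A (ecPre l1) (ecPre l2)) s := by
  have hbas1 : ∀ p ∈ l1, Basic p.2 := fun p hp => (hb1 p hp).basic
  have hbas2 : ∀ q ∈ l2, Basic q.2 := fun q hq => (hb2 q hq).basic
  have hexp : Eqv (Tm.par A (ecPre l1) (ecPre l2)) (expRHS A l1 l2) :=
    ⟨.exp1 A l1 l2 hbas1 hbas2, .exp2 A l1 l2 hbas1 hbas2⟩
  obtain ⟨s1, h1, e1⟩ : ∃ s, NF s ∧ Eqv (bigEC ((l1.filter fun p => decide (p.1 ∉ A)).map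
      fun p => Tm.pre (some p.1) (Tm.par A p.2 (ecPre l2)))) s := by
    apply combine_ec
    intro t ht
    rcases List.mem_map.1 ht with ⟨p, hp, rfl⟩
    have hpl1 : p ∈ l1 := (List.mem_filter.1 hp).1
    have hsx : sizeOf p.2 < sizeOf (ecPre l1) := mem_ecPre_size (a := p.1) (x := p.2) hpl1
    obtain ⟨w, hw, hew⟩ := ih (sizeOf p.2 + sizeOf (ecPre l2)) (by omega) A p.2 (ecPre l2)
      (hb1 p hpl1) (NFB_ecPre hnd2 hb2) (le_refl _)
    exact nf_pre_combine p.1 hw hew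
  obtain ⟨s2, h2, e2⟩ : ∃ s, NF s ∧ Eqv (bigEC ((l2.filter fun q => decide (q.1 ∉ A)).map
      fun q => Tm.pre (some q.1) (Tm.par A (ecPre l1) q.2))) s := by
    apply combine_ec
    intro t ht
    rcases List.mem_map.1 ht with ⟨q, hq, rfl⟩
    have hql2 : q ∈ l2 := (List.mem_filter.1 hq).1
    have hsy : sizeOf q.2 < sizeOf (ecPre l2) := mem_ecPre_size (a := q.1) (x := q.2) hql2
    obtain ⟨w, hw, hew⟩ := ih (sizeOf (ecPre l1) + sizeOf q.2) (by omega) A (ecPre l1) q.2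
      (NFB_ecPre hnd1 hb1) (hb2 q hql2) (le_refl _)
    exact nf_pre_combine q.1 hw hew
  obtain ⟨s3, h3, e3⟩ : ∃ s, NF s ∧ Eqv (bigEC (((l1.product l2).filter
      fun q : (Act × Tm Act) × (Act × Tm Act) => decide (q.1.1 = q.2.1 ∧ q.1.1 ∈ A)).map
      fun q : (Act × Tm Act) × (Act × Tm Act) =>
        Tm.pre (some q.1.1) (Tm.par A q.1.2 q.2.2))) s := by
    apply combine_ec
    intro t ht
    rcases List.mem_map.1 ht with ⟨q, hq, rfl⟩
    have hqm : q ∈ l1.product l2 := (List.mem_filter.1 hq).1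
    have hq1 : q.1 ∈ l1 := (List.mem_product.1 hqm).1
    have hq2 : q.2 ∈ l2 := (List.mem_product.1 hqm).2
    have hsx : sizeOf q.1.2 < sizeOf (ecPre l1) :=
      mem_ecPre_size (a := q.1.1) (x := q.1.2) hq1
    have hsy : sizeOf q.2.2 < sizeOf (ecPre l2) :=
      mem_ecPre_size (a := q.2.1) (x := q.2.2) hq2
    obtain ⟨w, hw, hew⟩ := ih (sizeOf q.1.2 + sizeOf q.2.2) (by omega) A q.1.2 q.2.2
      (hb1 _ hq1) (hb2 _ hq2) (le_refl _)
    exact nf_pre_combine q.1.1 hw hew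
  obtain ⟨w12, hw12, ew12⟩ := nf_ec_combine h1 h2 e1 e2
  obtain ⟨w, hw, ew⟩ := nf_ec_combine hw12 h3 ew12 e3
  exact ⟨w, hw, hexp.trans ew⟩

theorem par_norm : ∀ (n : ℕ) (A : Set Act) (u v : Tm Act), NFB u → NFB v →
    sizeOf u + sizeOf v ≤ n → ∃ w, NF w ∧ Eqv (Tm.par A u v) w := by
  intro n
  induction n using Nat.strong_induction_on with
  | _ n ih =>
  intro A u v hu hv hsz
  obtain ⟨ls1, hne1, hnd1, hb1⟩ := hu
  obtain ⟨ls2, hne2, hnd2, hb2⟩ := hv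
  have hdis := op_bigDisj_distrib (Tm.par A) (fun h1 h2 => .par_mono A h1 h2)
    (fun x y => .pa_comm A x y) (fun x y z => .ds3 A x y z)
    (ls1.map ecPre) (ls2.map ecPre) (by simpa using hne1) (by simpa using hne2)
  obtain ⟨s, hs, he⟩ := combine_disj
    (((ls1.map ecPre).map fun a => (ls2.map ecPre).map fun b => Tm.par A a b).flatten)
    (fun t ht => by
      rcases List.mem_flatten.1 ht with ⟨Lm, hLm, htL⟩
      rcases List.mem_map.1 hLm with ⟨X, hX, rfl⟩
      rcases List.mem_map.1 htL with ⟨Y, hY, rfl⟩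
      rcases List.mem_map.1 hX with ⟨l1, hl1, rfl⟩
      rcases List.mem_map.1 hY with ⟨l2, hl2, rfl⟩
      have hs1 : sizeOf (ecPre l1) ≤ sizeOf (bigDisj (ls1.map ecPre)) :=
        mem_bigDisj_size (List.mem_map.2 ⟨l1, hl1, rfl⟩)
      have hs2 : sizeOf (ecPre l2) ≤ sizeOf (bigDisj (ls2.map ecPre)) :=
        mem_bigDisj_size (List.mem_map.2 ⟨l2, hl2, rfl⟩)
      exact par_ecPre_norm n ih A l1 l2 (hnd1 _ hl1) (hnd2 _ hl2) (hb1 _ hl1) (hb2 _ hl2)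
        (by omega))
  exact ⟨s, hs, hdis.trans he⟩

end CLL

theorem stmt18 (Act : Type) :
    ∀ t : CLL.Tm Act, ∃ s : CLL.Tm Act, CLL.NF s ∧ CLL.Deriv t s ∧ CLL.Deriv s t := by
  intro t
  suffices h : ∃ s, CLL.NF s ∧ CLL.Eqv t s by
    obtain ⟨s, hs, he⟩ := h
    exact ⟨s, hs, he.1, he.2⟩
  induction t with
  | nil => exact ⟨.nil, Or.inr CLL.NFB_nil, CLL.Eqv.refl _⟩
  | bot => exact ⟨.bot, Or.inl rfl, CLL.Eqv.refl _⟩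
  | pre α t ih =>
    obtain ⟨s, hs, he⟩ := ih
    cases α with
    | none => exact ⟨s, hs, (CLL.eqv_pr2 t).trans he⟩
    | some a => exact CLL.nf_pre_combine a hs he
  | ec t1 t2 ih1 ih2 =>
    obtain ⟨s1, hs1, he1⟩ := ih1
    obtain ⟨s2, hs2, he2⟩ := ih2
    exact CLL.nf_ec_combine hs1 hs2 he1 he2
  | conj t1 t2 ih1 ih2 =>
    obtain ⟨s1, hs1, he1⟩ := ih1
    obtain ⟨s2, hs2, he2⟩ := ih2
    have hc : CLL.Eqv (.conj t1 t2) (.conj s1 s2) := he1.conjc he2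
    rcases hs1 with rfl | hb1
    · exact ⟨.bot, Or.inl rfl, hc.trans (CLL.eqv_bot_co _)⟩
    rcases hs2 with rfl | hb2
    · exact ⟨.bot, Or.inl rfl, hc.trans (CLL.eqv_co_bot _)⟩
    obtain ⟨w, hw, hew⟩ := CLL.conj_norm (sizeOf s1 + sizeOf s2) s1 s2 hb1 hb2 (le_refl _)
    exact ⟨w, hw, hc.trans hew⟩
  | disj t1 t2 ih1 ih2 =>
    obtain ⟨s1, hs1, he1⟩ := ih1
    obtain ⟨s2, hs2, he2⟩ := ih2
    have hc : CLL.Eqv (.disj t1 t2) (.disj s1 s2) := he1.disjc he2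
    rcases hs1 with rfl | hb1
    · rcases hs2 with rfl | hb2
      · exact ⟨.bot, Or.inl rfl, hc.trans (CLL.eqv_di_bot _)⟩
      · exact ⟨s2, Or.inr hb2, hc.trans (CLL.eqv_bot_disj _)⟩
    rcases hs2 with rfl | hb2
    · exact ⟨s1, Or.inr hb1, hc.trans (CLL.eqv_di_bot _)⟩
    obtain ⟨w, hw, hew⟩ := CLL.NFB_disj hb1 hb2
    exact ⟨w, Or.inr hw, hc.trans hew⟩
  | par A t1 t2 ih1 ih2 =>
    obtain ⟨s1, hs1, he1⟩ := ih1
    obtain ⟨s2, hs2, he2⟩ := ih2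
    have hc : CLL.Eqv (.par A t1 t2) (.par A s1 s2) := he1.parc A he2
    rcases hs1 with rfl | hb1
    · exact ⟨.bot, Or.inl rfl, hc.trans (CLL.eqv_bot_pa A _)⟩
    rcases hs2 with rfl | hb2
    · exact ⟨.bot, Or.inl rfl, hc.trans (CLL.eqv_pa_bot A _)⟩
    obtain ⟨w, hw, hew⟩ := CLL.par_norm (sizeOf s1 + sizeOf s2) A s1 s2 hb1 hb2 (le_refl _)
    exact ⟨w, hw, hc.trans hew⟩
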